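/- The complete elliptic integrals K(k) := ∫₀¹ dx / (√(1−x²)·√(1−k²x²)) and E(k) := ∫₀¹ √(1−k²x²)/√(1−x²) dx satisfy, for k ∈ (0,1): K′(k) = (E(k) − (1−k²)K(k)) / (k(1−k²)) and E′(k) = (E(k) − K(k)) / k. -/

import Mathlib

/-- The complete elliptic integral of the first kind,
`K(k) = ∫₀¹ dx / (√(1−x²)·√(1−k²x²))`. -/
noncomputable def ellipticK (k : ℝ) : ℝ :=
  ∫ x in (0:ℝ)..1, 1 / (Real.sqrt (1 - x ^ 2) * Real.sqrt (1 - k ^ 2 * x ^ 2))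

/-- The complete elliptic integral of the second kind,
`E(k) = ∫₀¹ √(1−k²x²)/√(1−x²) dx`. -/
noncomputable def ellipticE (k : ℝ) : ℝ :=
  ∫ x in (0:ℝ)..1, Real.sqrt (1 - k ^ 2 * x ^ 2) / Real.sqrt (1 - x ^ 2)

open Real MeasureTheory Set intervalIntegral Metric
open scoped Interval

namespace Stmt14Aux

lemma ae_ne_one : ∀ᵐ t : ℝ ∂volume, t ≠ 1 := by
  rw [MeasureTheory.ae_iff]
  have : {t : ℝ | ¬ t ≠ 1} = {1} := by ext t; simp
  rw [this]
  exact measure_singleton 1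

lemma rpow_neg_half (t : ℝ) : t ^ (-(1/2) : ℝ) = 1 / Real.sqrt t := by
  rcases lt_trichotomy t 0 with h | h | h
  · rw [Real.rpow_def_of_neg h, Real.sqrt_eq_zero'.2 h.le, div_zero]
    have : Real.cos (-(1/2) * π) = 0 := by
      rw [neg_mul, Real.cos_neg]
      rw [show (1/2 : ℝ) * π = π / 2 by ring]
      exact Real.cos_pi_div_two
    rw [this, mul_zero]
  · subst h; rw [Real.zero_rpow (by norm_num), Real.sqrt_zero, div_zero]
  · rw [Real.rpow_neg h.le, Real.sqrt_eq_rpow, one_div]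
    norm_num

lemma intInt_bound (C : ℝ) :
    IntervalIntegrable (fun x => C / Real.sqrt (1 - x)) volume 0 1 := by
  have h1 : IntervalIntegrable (fun x : ℝ => x ^ (-(1/2) : ℝ)) volume 0 1 :=
    intervalIntegral.intervalIntegrable_rpow' (by norm_num)
  have h2 := ((h1.comp_sub_left 1).const_mul C).symm
  norm_num at h2
  have he : (fun x : ℝ => C * (1 - x) ^ (-(1/2) : ℝ)) = fun x => C / Real.sqrt (1 - x) := by
    funext x; rw [rpow_neg_half, mul_one_div]
  rwa [he] at h2


lemma ae_Ioo : ∀ᵐ t : ℝ ∂volume.restrict (Ι (0:ℝ) 1), t ∈ Ioo (0:ℝ) 1 := by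
  rw [Set.uIoc_of_le (by norm_num : (0:ℝ) ≤ 1)]
  filter_upwards [MeasureTheory.ae_restrict_mem measurableSet_Ioc,
    MeasureTheory.ae_restrict_of_ae ae_ne_one] with t ht ht1
  exact ⟨ht.1, lt_of_le_of_ne ht.2 ht1⟩

/-- Comparison criterion for interval integrability on `[0,1]` with a `1/√(1-x)` bound. -/
lemma intInt_of_bound {f : ℝ → ℝ} (hm : AEStronglyMeasurable f (volume.restrict (Ι (0:ℝ) 1)))
    {C : ℝ} (hb : ∀ x ∈ Ioo (0:ℝ) 1, |f x| ≤ C / Real.sqrt (1 - x)) :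
    IntervalIntegrable f volume 0 1 := by
  refine (intInt_bound C).mono_fun hm ?_
  filter_upwards [ae_Ioo] with x hx
  have h1 : 0 < Real.sqrt (1 - x) := Real.sqrt_pos.2 (by linarith [hx.2])
  have hC : 0 ≤ C := by
    have h2 := (abs_nonneg (f x)).trans (hb x hx)
    have h3 : (0:ℝ) ≤ (C / Real.sqrt (1 - x)) * Real.sqrt (1 - x) := mul_nonneg h2 h1.le
    rwa [div_mul_cancel₀ C h1.ne'] at h3
  calc ‖f x‖ = |f x| := rfl
    _ ≤ C / Real.sqrt (1 - x) := hb x hx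
    _ = ‖C / Real.sqrt (1 - x)‖ := (Real.norm_of_nonneg (by positivity)).symm


lemma bound_master {x : ℝ} (hx : x ∈ Ioo (0:ℝ) 1) {p q b : ℝ} (n : ℕ)
    (hp0 : 0 ≤ p) (hp1 : p ≤ 1) (hb : 0 < b) (hq : b ≤ q) :
    p / (Real.sqrt (1 - x^2) * q^n) ≤ (1/b^n) / Real.sqrt (1 - x) := by
  have hs : 0 < Real.sqrt (1 - x) := Real.sqrt_pos.2 (by linarith [hx.2])
  have hws : Real.sqrt (1 - x) ≤ Real.sqrt (1 - x^2) :=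
    Real.sqrt_le_sqrt (by nlinarith [hx.1, hx.2])
  have hqn : b^n ≤ q^n := pow_le_pow_left₀ hb.le hq n
  have h2 : Real.sqrt (1 - x) * b^n ≤ Real.sqrt (1 - x^2) * q^n :=
    mul_le_mul hws hqn (by positivity) (Real.sqrt_nonneg _)
  calc p / (Real.sqrt (1 - x^2) * q^n) ≤ 1 / (Real.sqrt (1 - x) * b^n) :=
        div_le_div₀ zero_le_one hp1 (by positivity) h2
    _ = (1/b^n) / Real.sqrt (1 - x) := by
        rw [div_div]; ring_nf


section Integrands
variable {k : ℝ}

lemma d_le_v {k x : ℝ} (hx0 : 0 ≤ x) (hx1 : x ≤ 1) :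
    Real.sqrt (1-k^2) ≤ Real.sqrt (1-k^2*x^2) := by
  apply Real.sqrt_le_sqrt
  nlinarith [mul_nonneg (mul_nonneg (sq_nonneg k) (sub_nonneg.2 hx1)) (by linarith : (0:ℝ) ≤ 1 + x)]

lemma intK (hk2 : k^2 < 1) :
    IntervalIntegrable (fun x => 1 / (Real.sqrt (1-x^2) * Real.sqrt (1-k^2*x^2))) volume 0 1 := by
  refine intInt_of_bound ((Measurable.div (by fun_prop) (by fun_prop)).aestronglyMeasurable)
    (C := 1/Real.sqrt (1-k^2)) ?_
  intro x hx
  have hd : 0 < Real.sqrt (1-k^2) := Real.sqrt_pos.2 (by linarith)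
  have hv : Real.sqrt (1-k^2) ≤ Real.sqrt (1-k^2*x^2) :=
    d_le_v hx.1.le hx.2.le
  have hw : 0 < Real.sqrt (1-x^2) := Real.sqrt_pos.2 (by nlinarith [hx.1, hx.2])
  rw [abs_of_nonneg (by positivity)]
  simpa using bound_master hx 1 zero_le_one le_rfl hd hv

lemma intB (hk2 : k^2 < 1) :
    IntervalIntegrable (fun x => x^2 / (Real.sqrt (1-x^2) * Real.sqrt (1-k^2*x^2))) volume 0 1 := by
  refine intInt_of_bound ((Measurable.div (by fun_prop) (by fun_prop)).aestronglyMeasurable)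
    (C := 1/Real.sqrt (1-k^2)) ?_
  intro x hx
  have hd : 0 < Real.sqrt (1-k^2) := Real.sqrt_pos.2 (by linarith)
  have hv : Real.sqrt (1-k^2) ≤ Real.sqrt (1-k^2*x^2) :=
    d_le_v hx.1.le hx.2.le
  have hw : 0 < Real.sqrt (1-x^2) := Real.sqrt_pos.2 (by nlinarith [hx.1, hx.2])
  rw [abs_of_nonneg (by positivity)]
  simpa using bound_master hx 1 (by positivity) (by nlinarith [hx.1, hx.2]) hd hv

lemma intC (hk2 : k^2 < 1) :
    IntervalIntegrable (fun x => x^2 / (Real.sqrt (1-x^2) * Real.sqrt (1-k^2*x^2)^3)) volume 0 1 := by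
  refine intInt_of_bound ((Measurable.div (by fun_prop) (by fun_prop)).aestronglyMeasurable)
    (C := 1/Real.sqrt (1-k^2)^3) ?_
  intro x hx
  have hd : 0 < Real.sqrt (1-k^2) := Real.sqrt_pos.2 (by linarith)
  have hv : Real.sqrt (1-k^2) ≤ Real.sqrt (1-k^2*x^2) :=
    d_le_v hx.1.le hx.2.le
  have hw : 0 < Real.sqrt (1-x^2) := Real.sqrt_pos.2 (by nlinarith [hx.1, hx.2])
  rw [abs_of_nonneg (by positivity)]
  simpa using bound_master hx 3 (by positivity) (by nlinarith [hx.1, hx.2]) hd hv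

lemma intE (hk2 : k^2 < 1) :
    IntervalIntegrable (fun x => Real.sqrt (1-k^2*x^2) / Real.sqrt (1-x^2)) volume 0 1 := by
  refine intInt_of_bound ((Measurable.div (by fun_prop) (by fun_prop)).aestronglyMeasurable)
    (C := 1) ?_
  intro x hx
  have hw : 0 < Real.sqrt (1-x^2) := Real.sqrt_pos.2 (by nlinarith [hx.1, hx.2])
  rw [abs_of_nonneg (by positivity)]
  have hv1 : Real.sqrt (1-k^2*x^2) ≤ 1 :=
    Real.sqrt_le_one.2 (by nlinarith [sq_nonneg (k*x)])
  have := bound_master hx 0 (Real.sqrt_nonneg _) hv1 one_pos le_rfl (q := 1)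
  simpa using this

lemma intG (hk2 : k^2 < 1) :
    IntervalIntegrable (fun x => (1-x^2) / (Real.sqrt (1-x^2) * Real.sqrt (1-k^2*x^2))
      - (1-k^2) * (x^2 / (Real.sqrt (1-x^2) * Real.sqrt (1-k^2*x^2)^3))) volume 0 1 := by
  refine intInt_of_bound ((Measurable.sub (Measurable.div (by fun_prop) (by fun_prop))
    (Measurable.mul (by fun_prop) (Measurable.div (by fun_prop) (by fun_prop)))).aestronglyMeasurable)
    (C := 1/Real.sqrt (1-k^2) + (1-k^2) * (1/Real.sqrt (1-k^2)^3)) ?_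
  intro x hx
  have hd : 0 < Real.sqrt (1-k^2) := Real.sqrt_pos.2 (by linarith)
  have hv : Real.sqrt (1-k^2) ≤ Real.sqrt (1-k^2*x^2) :=
    d_le_v hx.1.le hx.2.le
  have hw : 0 < Real.sqrt (1-x^2) := Real.sqrt_pos.2 (by nlinarith [hx.1, hx.2])
  have hs : 0 < Real.sqrt (1-x) := Real.sqrt_pos.2 (by linarith [hx.2])
  have h1 : (1-x^2) / (Real.sqrt (1-x^2) * Real.sqrt (1-k^2*x^2))
      ≤ (1/Real.sqrt (1-k^2)) / Real.sqrt (1-x) := by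
    simpa using bound_master hx 1 (by nlinarith [hx.1, hx.2]) (by nlinarith [hx.1, hx.2]) hd hv
  have h2 : x^2 / (Real.sqrt (1-x^2) * Real.sqrt (1-k^2*x^2)^3)
      ≤ (1/Real.sqrt (1-k^2)^3) / Real.sqrt (1-x) := by
    simpa using bound_master hx 3 (by positivity) (by nlinarith [hx.1, hx.2]) hd hv
  have ha : |(1-x^2) / (Real.sqrt (1-x^2) * Real.sqrt (1-k^2*x^2))
      - (1-k^2) * (x^2 / (Real.sqrt (1-x^2) * Real.sqrt (1-k^2*x^2)^3))|
      ≤ (1-x^2) / (Real.sqrt (1-x^2) * Real.sqrt (1-k^2*x^2))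
      + (1-k^2) * (x^2 / (Real.sqrt (1-x^2) * Real.sqrt (1-k^2*x^2)^3)) := by
    have n1 : (0:ℝ) ≤ (1-x^2) / (Real.sqrt (1-x^2) * Real.sqrt (1-k^2*x^2)) := by
      have : (0:ℝ) ≤ 1 - x^2 := by nlinarith [hx.1, hx.2]
      positivity
    have n2 : (0:ℝ) ≤ (1-k^2) * (x^2 / (Real.sqrt (1-x^2) * Real.sqrt (1-k^2*x^2)^3)) := by
      have : (0:ℝ) ≤ 1 - k^2 := by linarith
      positivity
    calc |_ - _| ≤ |(1-x^2) / (Real.sqrt (1-x^2) * Real.sqrt (1-k^2*x^2))|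
        + |(1-k^2) * (x^2 / (Real.sqrt (1-x^2) * Real.sqrt (1-k^2*x^2)^3))| := abs_sub _ _
      _ = _ + _ := by rw [abs_of_nonneg n1, abs_of_nonneg n2]
  refine ha.trans ?_
  rw [add_div]
  gcongr
  calc (1-k^2) * (x^2 / (Real.sqrt (1-x^2) * Real.sqrt (1-k^2*x^2)^3))
      ≤ (1-k^2) * ((1/Real.sqrt (1-k^2)^3) / Real.sqrt (1-x)) := by
        apply mul_le_mul_of_nonneg_left h2 (by linarith)
    _ = (1-k^2) * (1/Real.sqrt (1-k^2)^3) / Real.sqrt (1-x) := by ring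

end Integrands

/-- Derivative of `x * √(1-x²)/√(1-k²x²)` in `x`. -/
lemma hasDerivAt_fX {k x : ℝ} (hk2 : k^2 < 1) (hx : x ∈ Ioo (0:ℝ) 1) :
    HasDerivAt (fun y => y * Real.sqrt (1-y^2) / Real.sqrt (1-k^2*y^2))
      ((1-x^2) / (Real.sqrt (1-x^2) * Real.sqrt (1-k^2*x^2))
        - (1-k^2) * (x^2 / (Real.sqrt (1-x^2) * Real.sqrt (1-k^2*x^2)^3))) x := by
  have hw2 : (0:ℝ) < 1 - x^2 := by nlinarith [hx.1, hx.2]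
  have hv2 : (0:ℝ) < 1 - k^2*x^2 := by
    nlinarith [mul_nonneg (mul_nonneg (sq_nonneg k) (sub_nonneg.2 hx.2.le)) (by linarith [hx.1] : (0:ℝ) ≤ 1 + x)]
  have hw : 0 < Real.sqrt (1-x^2) := Real.sqrt_pos.2 hw2
  have hv : 0 < Real.sqrt (1-k^2*x^2) := Real.sqrt_pos.2 hv2
  have hwsq : Real.sqrt (1-x^2)^2 = 1 - x^2 := Real.sq_sqrt hw2.le
  have hvsq : Real.sqrt (1-k^2*x^2)^2 = 1 - k^2*x^2 := Real.sq_sqrt hv2.le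
  have hu1 : HasDerivAt (fun y : ℝ => 1 - y^2) (-(2*x)) x := by
    simpa using (hasDerivAt_pow 2 x).const_sub 1
  have hu2 : HasDerivAt (fun y : ℝ => 1 - k^2*y^2) (-(k^2*(2*x))) x := by
    simpa using ((hasDerivAt_pow 2 x).const_mul (k^2)).const_sub 1
  have hsw : HasDerivAt (fun y : ℝ => Real.sqrt (1-y^2))
      (1 / (2 * Real.sqrt (1-x^2)) * (-(2*x))) x :=
    (Real.hasDerivAt_sqrt hw2.ne').comp x hu1
  have hsv : HasDerivAt (fun y : ℝ => Real.sqrt (1-k^2*y^2))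
      (1 / (2 * Real.sqrt (1-k^2*x^2)) * (-(k^2*(2*x)))) x :=
    (Real.hasDerivAt_sqrt hv2.ne').comp x hu2
  have hnum : HasDerivAt (fun y : ℝ => y * Real.sqrt (1-y^2))
      (1 * Real.sqrt (1-x^2) + x * (1 / (2 * Real.sqrt (1-x^2)) * (-(2*x)))) x :=
    (hasDerivAt_id x).mul hsw
  have h := hnum.div hsv hv.ne'
  refine h.congr_deriv ?_
  symm
  set W := Real.sqrt (1-x^2) with hW
  set V := Real.sqrt (1-k^2*x^2) with hV
  field_simp
  ring_nf
  linear_combination (1 - W^2) * hvsq - hwsq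

lemma ftc {k : ℝ} (hk2 : k^2 < 1) :
    ∫ x in (0:ℝ)..1, ((1-x^2) / (Real.sqrt (1-x^2) * Real.sqrt (1-k^2*x^2))
      - (1-k^2) * (x^2 / (Real.sqrt (1-x^2) * Real.sqrt (1-k^2*x^2)^3))) = 0 := by
  have hvpos : ∀ x ∈ Icc (0:ℝ) 1, (0:ℝ) < 1 - k^2*x^2 := by
    intro x hx
    nlinarith [mul_nonneg (mul_nonneg (sq_nonneg k) (sub_nonneg.2 hx.2)) (by linarith [hx.1] : (0:ℝ) ≤ 1 + x)]
  have hcont : ContinuousOn (fun y : ℝ => y * Real.sqrt (1-y^2) / Real.sqrt (1-k^2*y^2)) (Icc 0 1) := by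
    apply ContinuousOn.div
    · exact (continuous_id.mul (Real.continuous_sqrt.comp (by continuity))).continuousOn
    · exact (Real.continuous_sqrt.comp (by continuity)).continuousOn
    · exact fun x hx => (Real.sqrt_pos.2 (hvpos x hx)).ne'
  have h := intervalIntegral.integral_eq_sub_of_hasDeriv_right_of_le (by norm_num : (0:ℝ) ≤ 1)
    hcont (fun x hx => (hasDerivAt_fX hk2 hx).hasDerivWithinAt) (intG hk2)
  rw [h]
  norm_num

lemma uIoc_mem {t : ℝ} (hmem : t ∈ Ι (0:ℝ) 1) (hne : t ≠ 1) : t ∈ Ioo (0:ℝ) 1 := by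
  rw [Set.uIoc_of_le (by norm_num : (0:ℝ) ≤ 1)] at hmem
  exact ⟨hmem.1, lt_of_le_of_ne hmem.2 hne⟩

lemma ball_facts {k k' : ℝ} (hk : k ∈ Ioo (0:ℝ) 1) (hk' : k' ∈ ball k ((1-k)/2)) :
    |k'| < (1+k)/2 := by
  rw [mem_ball, Real.dist_eq] at hk'
  have := abs_sub_abs_le_abs_sub k' k
  rw [abs_of_pos hk.1] at this
  linarith

lemma hasDerivAt_K {k : ℝ} (hk : k ∈ Ioo (0:ℝ) 1) :
    HasDerivAt ellipticK
      (∫ x in (0:ℝ)..1, k * x^2 / (Real.sqrt (1-x^2) * Real.sqrt (1-k^2*x^2)^3)) k := by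
  set c : ℝ := (1+k)/2 with hc
  have hc1 : c < 1 := by rw [hc]; linarith [hk.2]
  have hc0 : 0 < c := by rw [hc]; linarith [hk.1]
  have hcsq : c^2 < 1 := by nlinarith
  have hb0 : 0 < Real.sqrt (1-c^2) := Real.sqrt_pos.2 (by linarith)
  have hεpos : (0:ℝ) < (1-k)/2 := by linarith [hk.2]
  have hk2 : k^2 < 1 := by nlinarith [hk.1, hk.2]
  have key : ∀ k' ∈ ball k ((1-k)/2), ∀ t ∈ Icc (0:ℝ) 1,
      Real.sqrt (1-c^2) ≤ Real.sqrt (1-k'^2*t^2) ∧ (0:ℝ) < 1 - k'^2*t^2 := by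
    intro k' hk' t ht
    have h1 : |k'| < c := ball_facts hk hk'
    have h2 : k'^2 < c^2 := by
      have := sq_abs k'
      nlinarith [abs_nonneg k']
    have h3 : k'^2*t^2 ≤ c^2 := by
      nlinarith [mul_le_mul_of_nonneg_left (show t^2 ≤ 1 by nlinarith [ht.1, ht.2]) (sq_nonneg k')]
    exact ⟨Real.sqrt_le_sqrt (by nlinarith), by nlinarith⟩
  have main := intervalIntegral.hasDerivAt_integral_of_dominated_loc_of_deriv_le
    (F := fun k' x => 1 / (Real.sqrt (1-x^2) * Real.sqrt (1-k'^2*x^2)))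
    (F' := fun k' x => k' * x^2 / (Real.sqrt (1-x^2) * Real.sqrt (1-k'^2*x^2)^3))
    (bound := fun t => (1/Real.sqrt (1-c^2)^3) / Real.sqrt (1-t))
    (a := 0) (b := 1) (x₀ := k) (μ := volume) (s := ball k ((1-k)/2)) (ball_mem_nhds k hεpos)
    (Filter.Eventually.of_forall fun k' =>
      (Measurable.div (by fun_prop) (by fun_prop)).aestronglyMeasurable)
    (intK hk2)
    ((Measurable.div (by fun_prop) (by fun_prop)).aestronglyMeasurable)
    ?_ (intInt_bound _) ?_
  · exact main.2
  · -- bound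
    filter_upwards [ae_ne_one] with t hne hmem k' hk'
    have ht : t ∈ Ioo (0:ℝ) 1 := uIoc_mem hmem hne
    obtain ⟨hq, hv2⟩ := key k' hk' t ⟨ht.1.le, ht.2.le⟩
    have hw : 0 < Real.sqrt (1-t^2) := Real.sqrt_pos.2 (by nlinarith [ht.1, ht.2])
    have hv : 0 < Real.sqrt (1-k'^2*t^2) := Real.sqrt_pos.2 hv2
    have h1 : |k'| < c := ball_facts hk hk'
    have hnorm : ‖k' * t^2 / (Real.sqrt (1-t^2) * Real.sqrt (1-k'^2*t^2)^3)‖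
        = |k'| * t^2 / (Real.sqrt (1-t^2) * Real.sqrt (1-k'^2*t^2)^3) := by
      rw [Real.norm_eq_abs, abs_div]
      congr 1
      · rw [abs_mul, abs_of_nonneg (sq_nonneg t)]
      · rw [abs_of_pos (by positivity)]
    rw [hnorm]
    have hp1 : |k'| * t^2 ≤ 1 := by nlinarith [abs_nonneg k', ht.1, ht.2]
    have := bound_master ht 3 (by positivity : (0:ℝ) ≤ |k'| * t^2) hp1 hb0 hq
    simpa [mul_div_assoc, mul_comm, mul_assoc] using this
  · -- differentiability
    filter_upwards [ae_ne_one] with t hne hmem k' hk'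
    have ht : t ∈ Ioo (0:ℝ) 1 := uIoc_mem hmem hne
    obtain ⟨hq, hv2⟩ := key k' hk' t ⟨ht.1.le, ht.2.le⟩
    have hw2 : (0:ℝ) < 1 - t^2 := by nlinarith [ht.1, ht.2]
    have hw : 0 < Real.sqrt (1-t^2) := Real.sqrt_pos.2 hw2
    have hv : 0 < Real.sqrt (1-k'^2*t^2) := Real.sqrt_pos.2 hv2
    have hu : HasDerivAt (fun y : ℝ => 1 - y^2*t^2) (-(2*k'*t^2)) k' := by
      have := ((hasDerivAt_pow 2 k').mul_const (t^2)).const_sub 1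
      simpa [mul_comm, mul_assoc] using this
    have hsv : HasDerivAt (fun y : ℝ => Real.sqrt (1-y^2*t^2))
        (1 / (2 * Real.sqrt (1-k'^2*t^2)) * (-(2*k'*t^2))) k' :=
      (Real.hasDerivAt_sqrt hv2.ne').comp k' hu
    have hprod := hsv.const_mul (Real.sqrt (1-t^2))
    have h := (hasDerivAt_const k' (1:ℝ)).div hprod (by positivity)
    refine h.congr_deriv ?_
    symm
    field_simp
    ring

lemma hasDerivAt_E {k : ℝ} (hk : k ∈ Ioo (0:ℝ) 1) :
    HasDerivAt ellipticE
      (∫ x in (0:ℝ)..1, -(k * x^2) / (Real.sqrt (1-x^2) * Real.sqrt (1-k^2*x^2))) k := by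
  set c : ℝ := (1+k)/2 with hc
  have hc1 : c < 1 := by rw [hc]; linarith [hk.2]
  have hc0 : 0 < c := by rw [hc]; linarith [hk.1]
  have hcsq : c^2 < 1 := by nlinarith
  have hb0 : 0 < Real.sqrt (1-c^2) := Real.sqrt_pos.2 (by linarith)
  have hεpos : (0:ℝ) < (1-k)/2 := by linarith [hk.2]
  have hk2 : k^2 < 1 := by nlinarith [hk.1, hk.2]
  have key : ∀ k' ∈ ball k ((1-k)/2), ∀ t ∈ Icc (0:ℝ) 1,
      Real.sqrt (1-c^2) ≤ Real.sqrt (1-k'^2*t^2) ∧ (0:ℝ) < 1 - k'^2*t^2 := by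
    intro k' hk' t ht
    have h1 : |k'| < c := ball_facts hk hk'
    have h2 : k'^2 < c^2 := by
      have := sq_abs k'
      nlinarith [abs_nonneg k']
    have h3 : k'^2*t^2 ≤ c^2 := by
      nlinarith [mul_le_mul_of_nonneg_left (show t^2 ≤ 1 by nlinarith [ht.1, ht.2]) (sq_nonneg k')]
    exact ⟨Real.sqrt_le_sqrt (by nlinarith), by nlinarith⟩
  have main := intervalIntegral.hasDerivAt_integral_of_dominated_loc_of_deriv_le
    (F := fun k' x => Real.sqrt (1-k'^2*x^2) / Real.sqrt (1-x^2))
    (F' := fun k' x => -(k' * x^2) / (Real.sqrt (1-x^2) * Real.sqrt (1-k'^2*x^2)))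
    (bound := fun t => (1/Real.sqrt (1-c^2)) / Real.sqrt (1-t))
    (a := 0) (b := 1) (x₀ := k) (μ := volume) (s := ball k ((1-k)/2)) (ball_mem_nhds k hεpos)
    (Filter.Eventually.of_forall fun k' =>
      (Measurable.div (by fun_prop) (by fun_prop)).aestronglyMeasurable)
    (intE hk2)
    ((Measurable.div (by fun_prop) (by fun_prop)).aestronglyMeasurable)
    ?_ (intInt_bound _) ?_
  · exact main.2
  · -- bound
    filter_upwards [ae_ne_one] with t hne hmem k' hk'
    have ht : t ∈ Ioo (0:ℝ) 1 := uIoc_mem hmem hne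
    obtain ⟨hq, hv2⟩ := key k' hk' t ⟨ht.1.le, ht.2.le⟩
    have hw : 0 < Real.sqrt (1-t^2) := Real.sqrt_pos.2 (by nlinarith [ht.1, ht.2])
    have hv : 0 < Real.sqrt (1-k'^2*t^2) := Real.sqrt_pos.2 hv2
    have h1 : |k'| < c := ball_facts hk hk'
    have hnorm : ‖-(k' * t^2) / (Real.sqrt (1-t^2) * Real.sqrt (1-k'^2*t^2))‖
        = |k'| * t^2 / (Real.sqrt (1-t^2) * Real.sqrt (1-k'^2*t^2)) := by
      rw [Real.norm_eq_abs, abs_div]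
      congr 1
      · rw [abs_neg, abs_mul, abs_of_nonneg (sq_nonneg t)]
      · rw [abs_of_pos (by positivity)]
    rw [hnorm]
    have hp1 : |k'| * t^2 ≤ 1 := by nlinarith [abs_nonneg k', ht.1, ht.2]
    have := bound_master ht 1 (by positivity : (0:ℝ) ≤ |k'| * t^2) hp1 hb0 hq
    simpa [mul_div_assoc, mul_comm, mul_assoc] using this
  · -- differentiability
    filter_upwards [ae_ne_one] with t hne hmem k' hk'
    have ht : t ∈ Ioo (0:ℝ) 1 := uIoc_mem hmem hne
    obtain ⟨hq, hv2⟩ := key k' hk' t ⟨ht.1.le, ht.2.le⟩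
    have hw2 : (0:ℝ) < 1 - t^2 := by nlinarith [ht.1, ht.2]
    have hw : 0 < Real.sqrt (1-t^2) := Real.sqrt_pos.2 hw2
    have hv : 0 < Real.sqrt (1-k'^2*t^2) := Real.sqrt_pos.2 hv2
    have hu : HasDerivAt (fun y : ℝ => 1 - y^2*t^2) (-(2*k'*t^2)) k' := by
      have := ((hasDerivAt_pow 2 k').mul_const (t^2)).const_sub 1
      simpa [mul_comm, mul_assoc] using this
    have hsv : HasDerivAt (fun y : ℝ => Real.sqrt (1-y^2*t^2))
        (1 / (2 * Real.sqrt (1-k'^2*t^2)) * (-(2*k'*t^2))) k' :=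
      (Real.hasDerivAt_sqrt hv2.ne').comp k' hu
    have h := hsv.div_const (Real.sqrt (1-t^2))
    refine h.congr_deriv ?_
    symm
    field_simp

lemma E_eq {k : ℝ} (hk2 : k^2 < 1) :
    ellipticE k = (∫ x in (0:ℝ)..1, 1 / (Real.sqrt (1-x^2) * Real.sqrt (1-k^2*x^2)))
      - k^2 * ∫ x in (0:ℝ)..1, x^2 / (Real.sqrt (1-x^2) * Real.sqrt (1-k^2*x^2)) := by
  rw [show ellipticE k = ∫ x in (0:ℝ)..1, Real.sqrt (1-k^2*x^2) / Real.sqrt (1-x^2) from rfl]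
  rw [intervalIntegral.integral_congr (g := fun x => 1 / (Real.sqrt (1-x^2) * Real.sqrt (1-k^2*x^2))
      - k^2 * (x^2 / (Real.sqrt (1-x^2) * Real.sqrt (1-k^2*x^2)))) ?_]
  · rw [intervalIntegral.integral_sub (intK hk2) ((intB hk2).const_mul (k^2)),
      intervalIntegral.integral_const_mul]
  · intro x hx
    rw [Set.uIcc_of_le (by norm_num : (0:ℝ) ≤ 1)] at hx
    have hv2 : (0:ℝ) < 1 - k^2*x^2 := by
      nlinarith [mul_nonneg (mul_nonneg (sq_nonneg k) (sub_nonneg.2 hx.2)) (by linarith [hx.1] : (0:ℝ) ≤ 1 + x)]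
    have hv : 0 < Real.sqrt (1-k^2*x^2) := Real.sqrt_pos.2 hv2
    have hvsq : Real.sqrt (1-k^2*x^2)^2 = 1 - k^2*x^2 := Real.sq_sqrt hv2.le
    rcases eq_or_ne (Real.sqrt (1-x^2)) 0 with h | h
    · simp [h]
    · field_simp
      linear_combination hvsq

lemma J_eq {k : ℝ} (hk2 : k^2 < 1) :
    (∫ x in (0:ℝ)..1, 1 / (Real.sqrt (1-x^2) * Real.sqrt (1-k^2*x^2)))
      - (∫ x in (0:ℝ)..1, x^2 / (Real.sqrt (1-x^2) * Real.sqrt (1-k^2*x^2)))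
      - (1-k^2) * (∫ x in (0:ℝ)..1, x^2 / (Real.sqrt (1-x^2) * Real.sqrt (1-k^2*x^2)^3)) = 0 := by
  have h0 := ftc hk2
  rw [show (fun x : ℝ => (1-x^2) / (Real.sqrt (1-x^2) * Real.sqrt (1-k^2*x^2))
      - (1-k^2) * (x^2 / (Real.sqrt (1-x^2) * Real.sqrt (1-k^2*x^2)^3)))
    = fun x : ℝ => (1 / (Real.sqrt (1-x^2) * Real.sqrt (1-k^2*x^2))
        - x^2 / (Real.sqrt (1-x^2) * Real.sqrt (1-k^2*x^2)))
      - (1-k^2) * (x^2 / (Real.sqrt (1-x^2) * Real.sqrt (1-k^2*x^2)^3))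
    from funext fun x => by rw [sub_div] ] at h0
  rw [intervalIntegral.integral_sub ((intK hk2).sub (intB hk2)) ((intC hk2).const_mul (1-k^2)),
    intervalIntegral.integral_sub (intK hk2) (intB hk2),
    intervalIntegral.integral_const_mul] at h0
  exact h0

end Stmt14Aux

/-- For `k ∈ (0,1)`,
`K′(k) = (E(k) − (1−k²)K(k)) / (k(1−k²))` and `E′(k) = (E(k) − K(k)) / k`. -/
theorem stmt14 (k : ℝ) (hk : k ∈ Set.Ioo (0:ℝ) 1) :
    HasDerivAt ellipticK ((ellipticE k - (1 - k ^ 2) * ellipticK k) / (k * (1 - k ^ 2))) k ∧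
    HasDerivAt ellipticE ((ellipticE k - ellipticK k) / k) k := by
  open Stmt14Aux in
  obtain ⟨hk0, hk1⟩ := hk
  have hk2 : k^2 < 1 := by nlinarith
  have hne : (1:ℝ) - k^2 ≠ 0 := by nlinarith
  have hkne : k ≠ 0 := ne_of_gt hk0
  set I0 := ∫ x in (0:ℝ)..1, 1 / (Real.sqrt (1-x^2) * Real.sqrt (1-k^2*x^2)) with hI0
  set I1 := ∫ x in (0:ℝ)..1, x^2 / (Real.sqrt (1-x^2) * Real.sqrt (1-k^2*x^2)) with hI1
  set J1 := ∫ x in (0:ℝ)..1, x^2 / (Real.sqrt (1-x^2) * Real.sqrt (1-k^2*x^2)^3) with hJ1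
  have hKval : ellipticK k = I0 := rfl
  have hEval : ellipticE k = I0 - k^2 * I1 := Stmt14Aux.E_eq hk2
  have h0 : I0 - I1 - (1-k^2) * J1 = 0 := Stmt14Aux.J_eq hk2
  have hKd := Stmt14Aux.hasDerivAt_K ⟨hk0, hk1⟩
  have hEd := Stmt14Aux.hasDerivAt_E ⟨hk0, hk1⟩
  have hKint : (∫ x in (0:ℝ)..1, k * x^2 / (Real.sqrt (1-x^2) * Real.sqrt (1-k^2*x^2)^3))
      = k * J1 := by
    simp_rw [mul_div_assoc]
    exact intervalIntegral.integral_const_mul _ _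
  have hEint : (∫ x in (0:ℝ)..1, -(k * x^2) / (Real.sqrt (1-x^2) * Real.sqrt (1-k^2*x^2)))
      = -(k * I1) := by
    simp_rw [neg_div, mul_div_assoc]
    rw [intervalIntegral.integral_neg, intervalIntegral.integral_const_mul]
  rw [hKint] at hKd
  rw [hEint] at hEd
  constructor
  · convert hKd using 1
    rw [hEval, hKval]
    field_simp
    ring_nf
    linear_combination k^2 * h0
  · convert hEd using 1
    rw [hEval, hKval]
    field_simp
    ring
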